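/- Let c > 1, α ∈ (1,2), and let θ be a smooth admissible function with respect to c and α with Fourier coefficients (c_k)_{k∈ℤ} and c̃ = 2πα/log c. Then the function γ(x) := e^{(α−1)x} ∫_{e^x}^∞ y^{−α} θ(log y) dy is continuously differentiable on ℝ and has the absolutely convergent Fourier series representation γ(x) = ∑_{k∈ℤ} (c_k/(α − 1 − i k c̃)) e^{i k c̃ x} for all x ∈ ℝ. -/

import Mathlib

open MeasureTheory Real Filter Set Complex Topology

noncomputable section

lemma aux_cexp_hasDerivAt (s : ℂ) (u : ℝ) :
    HasDerivAt (fun t : ℝ => Complex.exp (s * t)) (s * Complex.exp (s * u)) u := by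
  have h : HasDerivAt (fun z : ℂ => Complex.exp (s * z)) (s * Complex.exp (s * u)) (u : ℂ) := by
    have := (Complex.hasDerivAt_exp (s * u)).comp (u : ℂ) ((hasDerivAt_id (u : ℂ)).const_mul s)
    simpa [Function.comp_def, mul_comm] using this
  exact h.comp_ofReal

lemma aux_norm_cexp (s : ℂ) (u : ℝ) : ‖Complex.exp (s * u)‖ = Real.exp (s.re * u) := by
  rw [Complex.norm_exp]
  congr 1
  simp [Complex.mul_re]

lemma aux_integrable_cexp {s : ℂ} (hs : s.re < 0) (x : ℝ) :
    IntegrableOn (fun u : ℝ => Complex.exp (s * u)) (Ioi x) := by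
  have hb : (0:ℝ) < -s.re := by linarith
  refine (exp_neg_integrableOn_Ioi x hb).mono' ?_ ?_
  · exact (Complex.continuous_exp.comp (continuous_const.mul Complex.continuous_ofReal)).aestronglyMeasurable
  · filter_upwards with u
    rw [aux_norm_cexp]
    simp

lemma aux_integral_cexp_Ioi {s : ℂ} (hs : s.re < 0) (x : ℝ) :
    ∫ u in Ioi x, Complex.exp (s * u) = -(Complex.exp (s * x) / s) := by
  have hs0 : s ≠ 0 := by
    intro h; rw [h] at hs; simp at hs
  have hderiv : ∀ u ∈ Ioi x, HasDerivAt (fun t : ℝ => Complex.exp (s * t) / s) (Complex.exp (s * u)) u := by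
    intro u _
    have h := (aux_cexp_hasDerivAt s u).div_const s
    rwa [mul_div_cancel_left₀ _ hs0] at h
  have htend : Tendsto (fun u : ℝ => Complex.exp (s * u) / s) atTop (𝓝 0) := by
    rw [tendsto_zero_iff_norm_tendsto_zero]
    have h1 : Tendsto (fun u : ℝ => (-s.re) * u) atTop atTop :=
      tendsto_id.const_mul_atTop (by linarith)
    have h2 : Tendsto (fun u : ℝ => s.re * u) atTop atBot := by
      have := tendsto_neg_atTop_atBot.comp h1
      refine this.congr fun u => ?_
      simp [Function.comp]
    have h3 : Tendsto (fun u : ℝ => Real.exp (s.re * u)) atTop (𝓝 0) :=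
      Real.tendsto_exp_atBot.comp h2
    have h4 := h3.div_const ‖s‖
    simp only [zero_div] at h4
    exact h4.congr fun u => by rw [norm_div, aux_norm_cexp]
  have hcont : ContinuousWithinAt (fun t : ℝ => Complex.exp (s * t) / s) (Ici x) x :=
    ((Complex.continuous_exp.comp (continuous_const.mul Complex.continuous_ofReal)).div_const s).continuousWithinAt
  rw [integral_Ioi_of_hasDerivAt_of_tendsto hcont hderiv (aux_integrable_cexp hs x) htend, zero_sub]

def IsAdmissible (c α : ℝ) (θ : ℝ → ℝ) : Prop :=
  (∀ x, 0 < θ x) ∧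
  Function.Periodic θ (Real.log (c ^ (1 / α))) ∧
  ∀ y δ : ℝ, 0 ≤ δ → θ (y + δ) ≤ Real.exp (α * δ) * θ y

def IsSmoothAdmissible (c α : ℝ) (θ : ℝ → ℝ) (cfs : ℤ → ℂ) : Prop :=
  IsAdmissible c α θ ∧ Continuous θ ∧
  (∀ k : ℤ, cfs (-k) = starRingEnd ℂ (cfs k)) ∧
  (∃ C > 0, ∀ k : ℤ, k ≠ 0 → ‖cfs k‖ ≤ C / (k : ℝ) ^ 2) ∧
  Summable (fun k : ℤ => ‖cfs k‖) ∧
  ∀ x : ℝ, HasSum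
    (fun k : ℤ => cfs k * Complex.exp (Complex.I * (k : ℂ) * ((2 * Real.pi * α / Real.log c : ℝ) : ℂ) * (x : ℂ)))
    ((θ x : ℂ))

theorem stmt6 (c α : ℝ) (hc : 1 < c) (hα : α ∈ Set.Ioo (1 : ℝ) 2)
    (θ : ℝ → ℝ) (cfs : ℤ → ℂ) (hθ : IsSmoothAdmissible c α θ cfs)
    (ctil : ℝ) (hctil : ctil = 2 * Real.pi * α / Real.log c)
    (γ : ℝ → ℝ)
    (hγ : ∀ x : ℝ,
      γ x = Real.exp ((α - 1) * x) * ∫ y in Set.Ioi (Real.exp x), y ^ (-α) * θ (Real.log y)) :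
    ContDiff ℝ 1 γ ∧
    (∀ x : ℝ,
      Summable (fun k : ℤ =>
        ‖(cfs k / ((α : ℂ) - 1 - Complex.I * (k : ℂ) * (ctil : ℂ))) *
          Complex.exp (Complex.I * (k : ℂ) * (ctil : ℂ) * (x : ℂ))‖) ∧
      HasSum
        (fun k : ℤ => (cfs k / ((α : ℂ) - 1 - Complex.I * (k : ℂ) * (ctil : ℂ))) *
          Complex.exp (Complex.I * (k : ℂ) * (ctil : ℂ) * (x : ℂ)))
        ((γ x : ℂ))) := by
  obtain ⟨hα1, hα2⟩ := hα
  obtain ⟨hadm, hθc, hconj, hdecay, hsum, hFour⟩ := hθ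
  rw [show (2 * Real.pi * α / Real.log c : ℝ) = ctil from hctil.symm] at hFour
  -- notation
  have hsre : ∀ k : ℤ, ((1 - (α:ℂ)) + Complex.I * (k:ℂ) * (ctil:ℂ)).re = 1 - α := by
    intro k; simp [Complex.mul_re]
  have hslt : ∀ k : ℤ, ((1 - (α:ℂ)) + Complex.I * (k:ℂ) * (ctil:ℂ)).re < 0 := by
    intro k; rw [hsre]; linarith
  have hdre : ∀ k : ℤ, ((α:ℂ) - 1 - Complex.I * (k:ℂ) * (ctil:ℂ)).re = α - 1 := by
    intro k; simp [Complex.mul_re]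
  have hd_ne : ∀ k : ℤ, ((α:ℂ) - 1 - Complex.I * (k:ℂ) * (ctil:ℂ)) ≠ 0 := by
    intro k h
    have h2 := hdre k
    rw [h] at h2
    simp at h2
    linarith
  have hd_lb : ∀ k : ℤ, α - 1 ≤ ‖(α:ℂ) - 1 - Complex.I * (k:ℂ) * (ctil:ℂ)‖ := by
    intro k
    calc α - 1 ≤ |((α:ℂ) - 1 - Complex.I * (k:ℂ) * (ctil:ℂ)).re| := by rw [hdre]; exact le_abs_self _
    _ ≤ ‖(α:ℂ) - 1 - Complex.I * (k:ℂ) * (ctil:ℂ)‖ := Complex.abs_re_le_norm _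
  have hnorm_e : ∀ (k : ℤ) (x : ℝ), ‖Complex.exp (Complex.I * (k:ℂ) * (ctil:ℂ) * (x:ℂ))‖ = 1 := by
    intro k x
    rw [aux_norm_cexp]
    simp [Complex.mul_re]
  have key : ∀ x : ℝ, HasSum
        (fun k : ℤ => (cfs k / ((α : ℂ) - 1 - Complex.I * (k : ℂ) * (ctil : ℂ))) *
          Complex.exp (Complex.I * (k : ℂ) * (ctil : ℂ) * (x : ℂ)))
        ((γ x : ℂ)) := by
    intro x
    -- substitution y = exp u
    have himg : Real.exp '' Ioi x = Ioi (Real.exp x) := by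
      ext y
      simp only [mem_image, mem_Ioi]
      constructor
      · rintro ⟨u, hu, rfl⟩; exact Real.exp_lt_exp.2 hu
      · intro hy
        have hy0 : 0 < y := lt_trans (Real.exp_pos x) hy
        exact ⟨Real.log y, by rwa [← Real.exp_lt_exp, Real.exp_log hy0], Real.exp_log hy0⟩
    have hsub : (∫ y in Ioi (Real.exp x), y ^ (-α) * θ (Real.log y))
        = ∫ u in Ioi x, Real.exp ((1-α)*u) * θ u := by
      rw [← himg, integral_image_eq_integral_abs_deriv_smul measurableSet_Ioi
          (fun u _ => (Real.hasDerivAt_exp u).hasDerivWithinAt) Real.exp_injective.injOn]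
      refine setIntegral_congr_fun measurableSet_Ioi fun u _ => ?_
      rw [abs_of_pos (Real.exp_pos u), smul_eq_mul, Real.log_exp,
        Real.rpow_def_of_pos (Real.exp_pos u), Real.log_exp, ← mul_assoc, ← Real.exp_add,
        show u + u * (-α) = (1-α)*u by ring]
    -- integrability of each term
    have hFk : ∀ k : ℤ, IntegrableOn
        (fun u : ℝ => cfs k * Complex.exp (((1 - (α:ℂ)) + Complex.I * (k:ℂ) * (ctil:ℂ)) * u)) (Ioi x) :=
      fun k => (aux_integrable_cexp (hslt k) x).const_mul (cfs k)
    have hintexp : IntegrableOn (fun u : ℝ => Real.exp ((1-α)*u)) (Ioi x) := by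
      have h := exp_neg_integrableOn_Ioi x (show (0:ℝ) < α - 1 by linarith)
      rwa [neg_sub] at h
    have hnormint : ∀ k : ℤ,
        (∫ u in Ioi x, ‖cfs k * Complex.exp (((1 - (α:ℂ)) + Complex.I * (k:ℂ) * (ctil:ℂ)) * u)‖)
        = ‖cfs k‖ * ∫ u in Ioi x, Real.exp ((1-α)*u) := by
      intro k
      have he : ∀ u : ℝ, ‖cfs k * Complex.exp (((1 - (α:ℂ)) + Complex.I * (k:ℂ) * (ctil:ℂ)) * u)‖
          = ‖cfs k‖ * Real.exp ((1-α)*u) := by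
        intro u
        rw [norm_mul, aux_norm_cexp, hsre k]
      simp_rw [he]
      exact integral_const_mul _ _
    have hsum_int : Summable (fun k : ℤ =>
        ∫ u in Ioi x, ‖cfs k * Complex.exp (((1 - (α:ℂ)) + Complex.I * (k:ℂ) * (ctil:ℂ)) * u)‖) := by
      refine (hsum.mul_right (∫ u in Ioi x, Real.exp ((1-α)*u))).congr fun k => (hnormint k).symm
    have hHS := hasSum_integral_of_summable_integral_norm hFk hsum_int
    -- identify the tsum
    have htsum : ∀ u : ℝ,
        (∑' k : ℤ, cfs k * Complex.exp (((1 - (α:ℂ)) + Complex.I * (k:ℂ) * (ctil:ℂ)) * u))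
        = ((Real.exp ((1-α)*u) * θ u : ℝ) : ℂ) := by
      intro u
      have h1 := (hFour u).mul_left (Complex.exp ((1 - (α:ℂ)) * u))
      have hfe : (fun k : ℤ => Complex.exp ((1 - (α:ℂ)) * u) * (cfs k * Complex.exp (Complex.I * (k:ℂ) * (ctil:ℂ) * u)))
          = fun k : ℤ => cfs k * Complex.exp (((1 - (α:ℂ)) + Complex.I * (k:ℂ) * (ctil:ℂ)) * u) := by
        funext k
        rw [show ((1 - (α:ℂ)) + Complex.I * (k:ℂ) * (ctil:ℂ)) * u
            = (1 - (α:ℂ)) * u + Complex.I * (k:ℂ) * (ctil:ℂ) * u by ring, Complex.exp_add]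
        ring
      rw [hfe] at h1
      rw [h1.tsum_eq]
      push_cast
      ring
    have hval : (∫ u in Ioi x, ∑' k : ℤ, cfs k * Complex.exp (((1 - (α:ℂ)) + Complex.I * (k:ℂ) * (ctil:ℂ)) * u))
        = (((∫ u in Ioi x, Real.exp ((1-α)*u) * θ u) : ℝ) : ℂ) := by
      simp_rw [htsum]
      exact integral_ofReal
    rw [hval] at hHS
    -- per-term integral values
    have hterm : ∀ k : ℤ,
        (∫ u in Ioi x, cfs k * Complex.exp (((1 - (α:ℂ)) + Complex.I * (k:ℂ) * (ctil:ℂ)) * u))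
        = cfs k * (Complex.exp (((1 - (α:ℂ)) + Complex.I * (k:ℂ) * (ctil:ℂ)) * x)
            / ((α:ℂ) - 1 - Complex.I * (k:ℂ) * (ctil:ℂ))) := by
      intro k
      rw [integral_const_mul, aux_integral_cexp_Ioi (hslt k) x,
        show ((α:ℂ) - 1 - Complex.I * (k:ℂ) * (ctil:ℂ))
          = -((1 - (α:ℂ)) + Complex.I * (k:ℂ) * (ctil:ℂ)) by ring, div_neg]
    have hHS2 : HasSum (fun k : ℤ => cfs k * (Complex.exp (((1 - (α:ℂ)) + Complex.I * (k:ℂ) * (ctil:ℂ)) * x)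
            / ((α:ℂ) - 1 - Complex.I * (k:ℂ) * (ctil:ℂ))))
        (((∫ u in Ioi x, Real.exp ((1-α)*u) * θ u : ℝ)) : ℂ) := by
      exact hHS.congr_fun fun k => (hterm k).symm
    -- multiply by exp ((α-1)x)
    have hmul := hHS2.mul_left ((Real.exp ((α-1)*x) : ℝ) : ℂ)
    have hγx : ((γ x : ℝ) : ℂ) = ((Real.exp ((α-1)*x) : ℝ) : ℂ) * (((∫ u in Ioi x, Real.exp ((1-α)*u) * θ u : ℝ)) : ℂ) := by
      rw [hγ x, hsub]
      push_cast
      ring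
    rw [← hγx] at hmul
    refine hmul.congr_fun fun k => ?_
    have hco : ((Real.exp ((α-1)*x) : ℝ) : ℂ) = Complex.exp (((α:ℂ)-1) * (x:ℂ)) := by
      rw [Complex.ofReal_exp]
      norm_cast
    have he : Complex.exp (((α:ℂ)-1) * (x:ℂ))
        * Complex.exp (((1 - (α:ℂ)) + Complex.I * (k:ℂ) * (ctil:ℂ)) * (x:ℂ))
        = Complex.exp (Complex.I * (k:ℂ) * (ctil:ℂ) * (x:ℂ)) := by
      rw [← Complex.exp_add]
      congr 1
      ring
    rw [hco, ← he]
    ring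
  have hsummand : ∀ x : ℝ, Summable (fun k : ℤ =>
      ‖(cfs k / ((α : ℂ) - 1 - Complex.I * (k : ℂ) * (ctil : ℂ))) *
        Complex.exp (Complex.I * (k : ℂ) * (ctil : ℂ) * (x : ℂ))‖) := by
    intro x
    refine Summable.of_nonneg_of_le (fun k => norm_nonneg _) (fun k => ?_) (hsum.mul_right (α-1)⁻¹)
    rw [norm_mul, hnorm_e, mul_one, norm_div]
    calc ‖cfs k‖ / ‖(α : ℂ) - 1 - Complex.I * (k : ℂ) * (ctil : ℂ)‖
        ≤ ‖cfs k‖ / (α - 1) := by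
          gcongr
          · exact hd_lb k
      _ = ‖cfs k‖ * (α - 1)⁻¹ := div_eq_mul_inv _ _
  refine ⟨?_, fun x => ⟨hsummand x, key x⟩⟩
  -- smoothness via term-by-term differentiation
  have hgd : ∀ (k : ℤ) (y : ℝ), HasDerivAt
      (fun t : ℝ => cfs k / ((α:ℂ) - 1 - Complex.I * (k:ℂ) * (ctil:ℂ)) *
        Complex.exp (Complex.I * (k:ℂ) * (ctil:ℂ) * (t:ℂ)))
      (cfs k / ((α:ℂ) - 1 - Complex.I * (k:ℂ) * (ctil:ℂ)) *
        (Complex.I * (k:ℂ) * (ctil:ℂ) * Complex.exp (Complex.I * (k:ℂ) * (ctil:ℂ) * (y:ℂ)))) y :=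
    fun k y => (aux_cexp_hasDerivAt (Complex.I * (k:ℂ) * (ctil:ℂ)) y).const_mul _
  have hgb : ∀ (k : ℤ) (y : ℝ),
      ‖cfs k / ((α:ℂ) - 1 - Complex.I * (k:ℂ) * (ctil:ℂ)) *
        (Complex.I * (k:ℂ) * (ctil:ℂ) * Complex.exp (Complex.I * (k:ℂ) * (ctil:ℂ) * (y:ℂ)))‖
      ≤ ‖cfs k‖ := by
    intro k y
    rw [norm_mul, norm_mul, hnorm_e, mul_one, norm_div]
    have him : ‖Complex.I * (k:ℂ) * (ctil:ℂ)‖ ≤ ‖(α:ℂ) - 1 - Complex.I * (k:ℂ) * (ctil:ℂ)‖ := by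
      have h1 : ((α:ℂ) - 1 - Complex.I * (k:ℂ) * (ctil:ℂ)).im = -((k:ℝ) * ctil) := by
        simp [Complex.mul_im]
      have h2 : ‖Complex.I * (k:ℂ) * (ctil:ℂ)‖ = |(k:ℝ) * ctil| := by
        rw [show Complex.I * (k:ℂ) * (ctil:ℂ) = (((k:ℝ) * ctil : ℝ):ℂ) * Complex.I by push_cast; ring,
          norm_mul, Complex.norm_I, mul_one,
          Complex.norm_real, Real.norm_eq_abs]
      calc ‖Complex.I * (k:ℂ) * (ctil:ℂ)‖
          = |((α:ℂ) - 1 - Complex.I * (k:ℂ) * (ctil:ℂ)).im| := by rw [h2, h1, abs_neg]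
        _ ≤ ‖(α:ℂ) - 1 - Complex.I * (k:ℂ) * (ctil:ℂ)‖ := Complex.abs_im_le_norm _
    have hd0 : (0:ℝ) < ‖(α:ℂ) - 1 - Complex.I * (k:ℂ) * (ctil:ℂ)‖ :=
      norm_pos_iff.2 (hd_ne k)
    calc ‖cfs k‖ / ‖(α:ℂ) - 1 - Complex.I * (k:ℂ) * (ctil:ℂ)‖ * ‖Complex.I * (k:ℂ) * (ctil:ℂ)‖
        ≤ ‖cfs k‖ / ‖(α:ℂ) - 1 - Complex.I * (k:ℂ) * (ctil:ℂ)‖ *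
          ‖(α:ℂ) - 1 - Complex.I * (k:ℂ) * (ctil:ℂ)‖ := by
          gcongr
      _ = ‖cfs k‖ := div_mul_cancel₀ _ (ne_of_gt hd0)
  have hg0 : Summable (fun k : ℤ => cfs k / ((α:ℂ) - 1 - Complex.I * (k:ℂ) * (ctil:ℂ)) *
      Complex.exp (Complex.I * (k:ℂ) * (ctil:ℂ) * ((0:ℝ):ℂ))) := (hsummand 0).of_norm
  have hΓd : ∀ y : ℝ, HasDerivAt
      (fun t : ℝ => ∑' k : ℤ, cfs k / ((α:ℂ) - 1 - Complex.I * (k:ℂ) * (ctil:ℂ)) *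
        Complex.exp (Complex.I * (k:ℂ) * (ctil:ℂ) * (t:ℂ)))
      (∑' k : ℤ, cfs k / ((α:ℂ) - 1 - Complex.I * (k:ℂ) * (ctil:ℂ)) *
        (Complex.I * (k:ℂ) * (ctil:ℂ) * Complex.exp (Complex.I * (k:ℂ) * (ctil:ℂ) * (y:ℂ)))) y :=
    fun y => hasDerivAt_tsum hsum hgd hgb hg0 y
  have hgc : ∀ k : ℤ, Continuous (fun y : ℝ =>
      cfs k / ((α:ℂ) - 1 - Complex.I * (k:ℂ) * (ctil:ℂ)) *
        (Complex.I * (k:ℂ) * (ctil:ℂ) * Complex.exp (Complex.I * (k:ℂ) * (ctil:ℂ) * (y:ℂ)))) :=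
    fun k => continuous_const.mul (continuous_const.mul
      (Complex.continuous_exp.comp (continuous_const.mul Complex.continuous_ofReal)))
  have hcontd : Continuous (fun y : ℝ => ∑' k : ℤ,
      cfs k / ((α:ℂ) - 1 - Complex.I * (k:ℂ) * (ctil:ℂ)) *
        (Complex.I * (k:ℂ) * (ctil:ℂ) * Complex.exp (Complex.I * (k:ℂ) * (ctil:ℂ) * (y:ℂ)))) :=
    continuous_tsum hgc hsum (fun k y => hgb k y)
  have hdiff : Differentiable ℝ (fun t : ℝ => ∑' k : ℤ,
      cfs k / ((α:ℂ) - 1 - Complex.I * (k:ℂ) * (ctil:ℂ)) *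
        Complex.exp (Complex.I * (k:ℂ) * (ctil:ℂ) * (t:ℂ))) :=
    fun y => (hΓd y).differentiableAt
  have hΓ1 : ContDiff ℝ 1 (fun t : ℝ => ∑' k : ℤ,
      cfs k / ((α:ℂ) - 1 - Complex.I * (k:ℂ) * (ctil:ℂ)) *
        Complex.exp (Complex.I * (k:ℂ) * (ctil:ℂ) * (t:ℂ))) := by
    refine contDiff_one_iff_deriv.mpr ⟨hdiff, ?_⟩
    have hdeq : deriv (fun t : ℝ => ∑' k : ℤ,
        cfs k / ((α:ℂ) - 1 - Complex.I * (k:ℂ) * (ctil:ℂ)) *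
          Complex.exp (Complex.I * (k:ℂ) * (ctil:ℂ) * (t:ℂ)))
        = fun y : ℝ => ∑' k : ℤ, cfs k / ((α:ℂ) - 1 - Complex.I * (k:ℂ) * (ctil:ℂ)) *
          (Complex.I * (k:ℂ) * (ctil:ℂ) * Complex.exp (Complex.I * (k:ℂ) * (ctil:ℂ) * (y:ℂ))) :=
      funext fun y => (hΓd y).deriv
    rw [hdeq]
    exact hcontd
  have hγeq : γ = fun y : ℝ => Complex.reCLM (∑' k : ℤ,
      cfs k / ((α:ℂ) - 1 - Complex.I * (k:ℂ) * (ctil:ℂ)) *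
        Complex.exp (Complex.I * (k:ℂ) * (ctil:ℂ) * (y:ℂ))) := by
    funext y
    rw [(key y).tsum_eq]
    simp
  rw [hγeq]
  exact Complex.reCLM.contDiff.comp hΓ1
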